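/- Let r ≥ 2 and n ≥ 1 be integers, let l be an integer with 0 ≤ l ≤ n, let k ≥ 0 be an integer, and let ε ∈ {0,1,…,r−1}^n be given by ε_i = 1 for 1 ≤ i ≤ l and ε_i = 0 for l < i ≤ n. Let ρ be the permutation of {1,…,n} with ρ(i) = l+1−i for 1 ≤ i ≤ l and ρ(i) = i for l < i ≤ n. Fix a permutation π of {1,…,n}, set γ = (ε_{π(1)},…,ε_{π(n)}), set σ = ρ∘π, and let D = Des(σ) = {i ∈ {1,…,n−1} : σ(i) > σ(i+1)}. Let A be the set of α ∈ ℤ_{≥0}^n such that α_{σ(1)} ≤ k − ε_{σ(1)}, α_{σ(i)} ≥ α_{σ(i+1)} for all 1 ≤ i ≤ n−1, and α_{σ(i)} > α_{σ(i+1)} whenever i ∈ D. Then the map sending α to λ = (λ_1,…,λ_n) with λ_i = α_{σ(i)} − |{d ∈ D : d ≥ i}| is a bijection from A onto the set of weakly decreasing λ ∈ ℤ_{≥0}^n with λ_1 ≤ k − des(γ,π), and it satisfies ∑_{i=1}^n λ_i = ∑_{i=1}^n α_i − maj(γ,π). -/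
import Mathlib


open Finset

/-- 1-based value of `π` at position `i ∈ {1,…,n}`, with the convention `π(0) = 0`. -/
def wval {n : ℕ} (π : Equiv.Perm (Fin n)) (i : ℕ) : ℕ :=
  if h : 1 ≤ i ∧ i ≤ n then (π ⟨i - 1, by omega⟩ : ℕ) + 1 else 0

/-- Color at position `i` (1-based), with the convention `ε_0 = 0`. -/
def wcolor {n : ℕ} (ε : Fin n → ℕ) (i : ℕ) : ℕ :=
  if h : 1 ≤ i ∧ i ≤ n then ε ⟨i - 1, by omega⟩ else 0

/-- The Biagioli–Zeng order on colored letters: `(j,c) > (k,d)`. -/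
def bzGT (a b : ℕ × ℕ) : Prop :=
  (a.2 = 0 ∧ b.2 = 0 ∧ b.1 < a.1) ∨ (0 < a.2 ∧ 0 < b.2 ∧ a.1 < b.1) ∨ (a.2 = 0 ∧ 0 < b.2)

instance (a b : ℕ × ℕ) : Decidable (bzGT a b) := by unfold bzGT; exact inferInstance

/-- The descent set `Des(ε,π) ⊆ {0,…,n-1}` of a colored permutation. -/
def DesBZ {n : ℕ} (ε : Fin n → ℕ) (π : Equiv.Perm (Fin n)) : Finset ℕ :=
  (Finset.range n).filter fun i =>
    bzGT (wval π i, wcolor ε i) (wval π (i + 1), wcolor ε (i + 1))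

def desBZ {n : ℕ} (ε : Fin n → ℕ) (π : Equiv.Perm (Fin n)) : ℕ := (DesBZ ε π).card

def majBZ {n : ℕ} (ε : Fin n → ℕ) (π : Equiv.Perm (Fin n)) : ℕ := ∑ i ∈ DesBZ ε π, i

/-- The color weight `col(ε)`. -/
def colwt {n : ℕ} (ε : Fin n → ℕ) : ℕ := ∑ i, ε i

/-- Ordinary descent set `{i ∈ {1,…,n-1} : σ(i) > σ(i+1)}` (1-based). -/
def ordDes {n : ℕ} (σ : Equiv.Perm (Fin n)) : Finset ℕ :=
  (Finset.range n).filter fun i => 1 ≤ i ∧ wval σ (i + 1) < wval σ i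

noncomputable def qP : MvPolynomial (Fin 2) ℤ := MvPolynomial.X 0
noncomputable def uP : MvPolynomial (Fin 2) ℤ := MvPolynomial.X 1
noncomputable def qNat (m : ℕ) : MvPolynomial (Fin 2) ℤ := ∑ i ∈ Finset.range m, qP ^ i
noncomputable def uNat (m : ℕ) : MvPolynomial (Fin 2) ℤ := ∑ i ∈ Finset.range m, uP ^ i

/-- The monomial `m'(j,k)`. -/
noncomputable def mPrime (j k : ℕ) : MvPolynomial (Fin 2) ℤ :=
  if j ≤ k then qP ^ j else qP ^ ((j - 1) % k) * uP ^ ((j - 1) / k)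

/-- Lattice points of `cone(F_ε)` at height `k`. -/
def Lset {n : ℕ} (ε : Fin n → ℕ) (k : ℕ) : Finset (Fin n → ℕ) :=
  Fintype.piFinset fun i =>
    if 0 < ε i then Finset.Ioc (k * ε i) (k * (ε i + 1)) else Finset.Icc 0 k


open Finset

def cD (D : Finset ℕ) (j : ℕ) : ℕ := (D.filter fun d => j + 1 ≤ d).card

lemma cD_zero {n : ℕ} (D : Finset ℕ) (hD : ∀ d ∈ D, 1 ≤ d ∧ d < n) : cD D 0 = D.card := by
  unfold cD
  rw [Finset.filter_true_of_mem]
  intro d hd; exact (hD d hd).1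

lemma cD_last (D : Finset ℕ) (n : ℕ) (hn : 1 ≤ n) (hD : ∀ d ∈ D, 1 ≤ d ∧ d < n) :
    cD D (n - 1) = 0 := by
  unfold cD
  rw [Finset.card_eq_zero, Finset.filter_eq_empty_iff]
  intro d hd
  have := hD d hd; omega

lemma cD_step (D : Finset ℕ) (j : ℕ) :
    cD D j = cD D (j + 1) + (if j + 1 ∈ D then 1 else 0) := by
  unfold cD
  by_cases hj : j + 1 ∈ D
  · rw [if_pos hj]
    have h2 : D.filter (fun d => j + 1 ≤ d) = insert (j + 1) (D.filter fun d => j + 1 + 1 ≤ d) := by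
      ext x
      simp only [Finset.mem_filter, Finset.mem_insert]
      constructor
      · rintro ⟨hx, hle⟩
        rcases eq_or_ne x (j + 1) with h | h
        · exact Or.inl h
        · exact Or.inr ⟨hx, by omega⟩
      · rintro (rfl | ⟨hx, hle⟩)
        · exact ⟨hj, by omega⟩
        · exact ⟨hx, by omega⟩
    rw [h2, Finset.card_insert_of_notMem (by simp)]
  · rw [if_neg hj]
    have h2 : D.filter (fun d => j + 1 ≤ d) = D.filter fun d => j + 1 + 1 ≤ d := by
      ext x
      simp only [Finset.mem_filter]
      constructor
      · rintro ⟨hx, hle⟩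
        refine ⟨hx, ?_⟩
        rcases eq_or_ne x (j + 1) with rfl | h
        · exact absurd hx hj
        · omega
      · rintro ⟨hx, hle⟩; exact ⟨hx, by omega⟩
    rw [h2]
    omega

lemma cD_sum (D : Finset ℕ) (n : ℕ) (hD : ∀ d ∈ D, 1 ≤ d ∧ d < n) :
    ∑ j ∈ Finset.range n, cD D j = ∑ d ∈ D, d := by
  unfold cD
  simp_rw [Finset.card_filter]
  rw [Finset.sum_comm]
  refine Finset.sum_congr rfl fun d hd => ?_
  have hdn := hD d hd
  rw [← Finset.card_filter]
  have h2 : (Finset.range n).filter (fun j => j + 1 ≤ d) = Finset.range d := by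
    ext x; simp only [Finset.mem_filter, Finset.mem_range]; omega
  rw [h2, Finset.card_range]

lemma bz_core {n l : ℕ} (ε : Fin n → ℕ) (hε : ∀ i : Fin n, ε i = if (i : ℕ) < l then 1 else 0)
    (ρ : Equiv.Perm (Fin n))
    (hρ : ∀ i : Fin n, (ρ i : ℕ) = if (i : ℕ) < l then l - 1 - (i : ℕ) else (i : ℕ))
    (a b : Fin n) :
    bzGT ((a : ℕ) + 1, ε a) ((b : ℕ) + 1, ε b) ↔ (ρ b : ℕ) < (ρ a : ℕ) := by
  have han : (a : ℕ) < n := a.isLt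
  have hbn : (b : ℕ) < n := b.isLt
  have hea := hε a; have heb := hε b; have hra := hρ a; have hrb := hρ b
  unfold bzGT
  generalize (a : ℕ) = av at *
  generalize (b : ℕ) = bv at *
  generalize (ρ a : ℕ) = rav at *
  generalize (ρ b : ℕ) = rbv at *
  generalize ε a = ea at *
  generalize ε b = eb at *
  split_ifs at hea heb hra hrb <;> omega

theorem composition_partition_bijection (r n : ℕ) (hr : 2 ≤ r) (hn : 1 ≤ n)
    (l : ℕ) (hl : l ≤ n) (k : ℕ) (ε : Fin n → ℕ)
    (hε : ∀ i : Fin n, ε i = if (i : ℕ) < l then 1 else 0)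
    (ρ : Equiv.Perm (Fin n))
    (hρ : ∀ i : Fin n, (ρ i : ℕ) = if (i : ℕ) < l then l - 1 - (i : ℕ) else (i : ℕ))
    (π : Equiv.Perm (Fin n))
    (σ : Equiv.Perm (Fin n)) (hσ : σ = ρ * π)
    (γ : Fin n → ℕ) (hγ : γ = fun i => ε (π i))
    (D : Finset ℕ) (hD : D = ordDes σ)
    (A : Set (Fin n → ℕ))
    (hA : A = {α : Fin n → ℕ | ((α (σ ⟨0, by omega⟩) : ℤ) ≤ (k : ℤ) - (ε (σ ⟨0, by omega⟩) : ℤ)) ∧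
        ∀ (i : ℕ) (h : i + 1 < n),
          α (σ ⟨i + 1, h⟩) ≤ α (σ ⟨i, by omega⟩) ∧
            (i + 1 ∈ D → α (σ ⟨i + 1, h⟩) < α (σ ⟨i, by omega⟩))})
    (B : Set (Fin n → ℤ))
    (hB : B = {lam : Fin n → ℤ | (∀ j, 0 ≤ lam j) ∧ (∀ j₁ j₂ : Fin n, j₁ ≤ j₂ → lam j₂ ≤ lam j₁) ∧
        lam ⟨0, by omega⟩ ≤ (k : ℤ) - (desBZ γ π : ℤ)})
    (f : (Fin n → ℕ) → Fin n → ℤ)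
    (hf : f = fun (α : Fin n → ℕ) (j : Fin n) => (α (σ j) : ℤ) - ((D.filter fun d => (j : ℕ) + 1 ≤ d).card : ℤ)) :
    Set.BijOn f A B ∧
      ∀ α ∈ A, (∑ j, f α j) = (∑ j, (α j : ℤ)) - (majBZ γ π : ℤ) := by
  subst hγ hD
  have hn0 : 0 < n := hn
  have hσv : ∀ j, σ j = ρ (π j) := fun j => by rw [hσ]; rfl
  have hρε : ∀ x : Fin n, ε (ρ x) = ε x := by
    intro x
    have hx := hρ x
    have hxn : (x : ℕ) < n := x.isLt
    rw [hε (ρ x), hε x]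
    by_cases h : (x : ℕ) < l
    · rw [if_pos h, if_pos (by rw [hx, if_pos h]; omega)]
    · rw [if_neg h, if_neg (by rw [hx, if_neg h]; exact h)]
  set D := ordDes σ with hDdef
  have hDlt : ∀ d ∈ D, 1 ≤ d ∧ d < n := by
    intro d hd
    rw [hDdef] at hd
    simp only [ordDes, Finset.mem_filter, Finset.mem_range] at hd
    exact ⟨hd.2.1, hd.1⟩
  have h0notD : 0 ∉ D := fun h => by have := hDlt 0 h; omega
  have h01 : ∀ x : Fin n, ε x = 0 ∨ ε x = 1 := by
    intro x; rw [hε x]; split_ifs <;> simp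
  have wv : ∀ (τ : Equiv.Perm (Fin n)) (m : ℕ) (h : m < n),
      wval τ (m + 1) = (τ ⟨m, h⟩ : ℕ) + 1 := by
    intro τ m h
    unfold wval
    rw [dif_pos ⟨by omega, by omega⟩]
    rfl
  have wc : ∀ (e : Fin n → ℕ) (m : ℕ) (h : m < n),
      wcolor e (m + 1) = e ⟨m, h⟩ := by
    intro e m h
    unfold wcolor
    rw [dif_pos ⟨by omega, by omega⟩]
    rfl
  -- characterize DesBZ
  have hmem : ∀ i : ℕ, i ∈ DesBZ (fun j => ε (π j)) π ↔
      ((i = 0 ∧ ε (π ⟨0, hn0⟩) ≠ 0) ∨ i ∈ D) := by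
    intro i
    rw [hDdef]
    simp only [DesBZ, ordDes, Finset.mem_filter, Finset.mem_range]
    rcases Nat.eq_zero_or_pos i with rfl | hi
    · have hw0 : wval π 0 = 0 := by unfold wval; rw [dif_neg (by omega)]
      have hc0 : wcolor (fun j => ε (π j)) 0 = 0 := by unfold wcolor; rw [dif_neg (by omega)]
      have hw1 : wval π (0 + 1) = (π ⟨0, hn0⟩ : ℕ) + 1 := wv π 0 hn0
      have hc1 : wcolor (fun j => ε (π j)) (0 + 1) = ε (π ⟨0, hn0⟩) := wc _ 0 hn0
      rw [hw0, hc0, hw1, hc1]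
      simp only [bzGT, true_and]
      omega
    · by_cases hin : i < n
      · have p1 : i - 1 < n := by omega
        have him : i - 1 + 1 = i := by omega
        have hwa : wval π i = (π ⟨i - 1, p1⟩ : ℕ) + 1 := by
          conv_lhs => rw [← him]
          exact wv π (i - 1) p1
        have hwb : wval π (i + 1) = (π ⟨i, hin⟩ : ℕ) + 1 := wv π i hin
        have hca : wcolor (fun j => ε (π j)) i = ε (π ⟨i - 1, p1⟩) := by
          conv_lhs => rw [← him]
          exact wc _ (i - 1) p1
        have hcb : wcolor (fun j => ε (π j)) (i + 1) = ε (π ⟨i, hin⟩) := wc _ i hin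
        have hsa : wval σ i = (ρ (π ⟨i - 1, p1⟩) : ℕ) + 1 := by
          conv_lhs => rw [← him]
          rw [wv σ (i - 1) p1, hσv]
        have hsb : wval σ (i + 1) = (ρ (π ⟨i, hin⟩) : ℕ) + 1 := by
          rw [wv σ i hin, hσv]
        rw [hwa, hwb, hca, hcb, hsa, hsb]
        have hcore := bz_core ε hε ρ hρ (π ⟨i - 1, p1⟩) (π ⟨i, hin⟩)
        constructor
        · rintro ⟨h1, h2⟩
          exact Or.inr ⟨h1, hi, by have := hcore.mp h2; omega⟩
        · rintro (⟨h1, -⟩ | ⟨h1, -, h3⟩)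
          · omega
          · exact ⟨h1, hcore.mpr (by omega)⟩
      · constructor
        · rintro ⟨h1, -⟩; omega
        · rintro (⟨rfl, -⟩ | ⟨h1, -⟩) <;> omega
  have hDesBZ : DesBZ (fun j => ε (π j)) π =
      if ε (π ⟨0, hn0⟩) = 0 then D else insert 0 D := by
    ext i
    rw [hmem i]
    by_cases he : ε (π ⟨0, hn0⟩) = 0
    · simp [he]
    · rw [if_neg he]
      simp only [Finset.mem_insert]
      constructor
      · rintro (⟨rfl, -⟩ | h)
        · exact Or.inl rfl
        · exact Or.inr h
      · rintro (rfl | h)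
        · exact Or.inl ⟨rfl, he⟩
        · exact Or.inr h
  have hdes : desBZ (fun j => ε (π j)) π = D.card + ε (π ⟨0, hn0⟩) := by
    unfold desBZ
    rw [hDesBZ]
    by_cases he : ε (π ⟨0, hn0⟩) = 0
    · rw [if_pos he, he]
      omega
    · rw [if_neg he, Finset.card_insert_of_notMem h0notD]
      rcases h01 (π ⟨0, hn0⟩) with h | h
      · exact absurd h he
      · omega
  have hmaj : majBZ (fun j => ε (π j)) π = ∑ d ∈ D, d := by
    unfold majBZ
    rw [hDesBZ]
    split_ifs
    · rfl
    · rw [Finset.sum_insert h0notD, Nat.zero_add]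
  have hεσ0 : ε (σ ⟨0, hn0⟩) = ε (π ⟨0, hn0⟩) := by rw [hσv]; exact hρε _
  -- values of f
  have hfval : ∀ (α : Fin n → ℕ) (j : Fin n),
      f α j = (α (σ j) : ℤ) - (cD D (j : ℕ) : ℤ) := by
    intro α j; rw [hf]; rfl
  -- chain inequalities from membership in A
  have key1 : ∀ α ∈ A, ∀ i j : Fin n, (j : ℕ) = (i : ℕ) + 1 →
      α (σ j) + (if (j : ℕ) ∈ D then 1 else 0) ≤ α (σ i) := by
    intro α hα i j hij
    rw [hA] at hα
    have hjn : (i : ℕ) + 1 < n := by have := j.isLt; omega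
    have spec := hα.2 (i : ℕ) hjn
    have e1 : (⟨(i : ℕ) + 1, hjn⟩ : Fin n) = j := Fin.ext (by rw [hij])
    have e2 : (⟨(i : ℕ), by omega⟩ : Fin n) = i := Fin.ext rfl
    rw [e1, e2] at spec
    rw [hij]
    by_cases hd : (i : ℕ) + 1 ∈ D
    · rw [if_pos hd]; have := spec.2 hd; omega
    · rw [if_neg hd]; omega
  have key0 : ∀ α ∈ A, (α (σ ⟨0, hn0⟩) : ℤ) ≤ (k : ℤ) - (ε (σ ⟨0, hn0⟩) : ℤ) := by
    intro α hα
    rw [hA] at hα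
    exact hα.1
  -- single step for f
  have fstep : ∀ α ∈ A, ∀ i j : Fin n, (j : ℕ) = (i : ℕ) + 1 → f α j ≤ f α i := by
    intro α hα i j hij
    rw [hfval, hfval, hij]
    have h1 := key1 α hα i j hij
    rw [hij] at h1
    have h2 := cD_step D (i : ℕ)
    by_cases hd : (i : ℕ) + 1 ∈ D
    · rw [if_pos hd] at h1 h2; omega
    · rw [if_neg hd] at h1 h2; omega
  -- monotonicity of f
  have hmono : ∀ α ∈ A, ∀ (m : ℕ), ∀ i j : Fin n, (i : ℕ) + m = (j : ℕ) → f α j ≤ f α i := by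
    intro α hα m
    induction m with
    | zero =>
      intro i j hij
      have : i = j := Fin.ext (by omega)
      rw [this]
    | succ m ih =>
      intro i j hij
      have hm : (i : ℕ) + m < n := by have := j.isLt; omega
      have a1 := ih i ⟨(i : ℕ) + m, hm⟩ rfl
      have a2 := fstep α hα ⟨(i : ℕ) + m, hm⟩ j (by simp; omega)
      exact le_trans a2 a1
  -- MapsTo
  have hmaps : Set.MapsTo f A B := by
    intro α hα
    rw [hB]
    refine ⟨?_, ?_, ?_⟩
    · intro j
      have h1 := hmono α hα (n - 1 - (j : ℕ)) j ⟨n - 1, by omega⟩ (by simp; omega)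
      have h2 : f α ⟨n - 1, by omega⟩ =
          (α (σ ⟨n - 1, by omega⟩) : ℤ) - (cD D (n - 1) : ℤ) := hfval α _
      rw [cD_last D n hn hDlt] at h2
      have h3 : (0 : ℤ) ≤ (α (σ ⟨n - 1, by omega⟩) : ℤ) := Int.natCast_nonneg _
      omega
    · intro j₁ j₂ hle
      have hle' : (j₁ : ℕ) ≤ (j₂ : ℕ) := hle
      exact hmono α hα ((j₂ : ℕ) - (j₁ : ℕ)) j₁ j₂ (by omega)
    · show f α ⟨0, hn0⟩ ≤ (k : ℤ) - (desBZ (fun j => ε (π j)) π : ℤ)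
      have h1 := key0 α hα
      have h2 : f α ⟨0, hn0⟩ = (α (σ ⟨0, hn0⟩) : ℤ) - (cD D 0 : ℤ) := hfval α _
      rw [cD_zero (n := n) D hDlt] at h2
      rw [hεσ0] at h1
      rw [hdes]
      omega
  -- InjOn
  have hinj : Set.InjOn f A := by
    intro α1 h1 α2 h2 heq
    funext x
    have := congrFun heq (σ.symm x)
    rw [hfval, hfval, Equiv.apply_symm_apply] at this
    omega
  -- SurjOn
  have hsurj : Set.SurjOn f A B := by
    intro lam hlam
    rw [hB] at hlam
    obtain ⟨hpos, hmon, htop⟩ := hlam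
    set α : Fin n → ℕ := fun i => (lam (σ.symm i) + (cD D ((σ.symm i : Fin n) : ℕ) : ℤ)).toNat
      with hαdef
    have hval : ∀ j : Fin n, (α (σ j) : ℤ) = lam j + (cD D (j : ℕ) : ℤ) := by
      intro j
      rw [hαdef]
      simp only [Equiv.symm_apply_apply]
      rw [Int.toNat_of_nonneg (add_nonneg (hpos j) (Int.natCast_nonneg _))]
    have hαA : α ∈ A := by
      rw [hA]
      constructor
      · have h1 : (α (σ ⟨0, hn0⟩) : ℤ) = lam ⟨0, hn0⟩ + (cD D 0 : ℤ) := hval ⟨0, hn0⟩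
        have h2 : lam ⟨0, hn0⟩ ≤ (k : ℤ) - (desBZ (fun j => ε (π j)) π : ℤ) := htop
        rw [cD_zero (n := n) D hDlt] at h1
        rw [hdes] at h2
        show (α (σ ⟨0, hn0⟩) : ℤ) ≤ (k : ℤ) - (ε (σ ⟨0, hn0⟩) : ℤ)
        rw [hεσ0]
        omega
      · intro i h
        have v1 : (α (σ ⟨i + 1, h⟩) : ℤ) = lam ⟨i + 1, h⟩ + (cD D (i + 1) : ℤ) :=
          hval ⟨i + 1, h⟩
        have v2 : (α (σ ⟨i, by omega⟩) : ℤ) = lam ⟨i, by omega⟩ + (cD D i : ℤ) :=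
          hval ⟨i, by omega⟩
        have hm : lam ⟨i + 1, h⟩ ≤ lam ⟨i, by omega⟩ :=
          hmon ⟨i, by omega⟩ ⟨i + 1, h⟩ (by simp [Fin.le_def])
        have hst := cD_step D i
        constructor
        · by_cases hd : i + 1 ∈ D
          · rw [if_pos hd] at hst; omega
          · rw [if_neg hd] at hst; omega
        · intro hd
          rw [if_pos hd] at hst
          omega
    refine ⟨α, hαA, ?_⟩
    funext j
    rw [hfval]
    have := hval j
    omega
  refine ⟨⟨hmaps, hinj, hsurj⟩, ?_⟩
  -- the sum identity
  intro α hα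
  have h1 : (∑ j, f α j) = ∑ j : Fin n, ((α (σ j) : ℤ) - (cD D (j : ℕ) : ℤ)) :=
    Finset.sum_congr rfl fun j _ => hfval α j
  rw [h1, Finset.sum_sub_distrib]
  have h2 : ∑ j : Fin n, (α (σ j) : ℤ) = ∑ j, (α j : ℤ) :=
    Equiv.sum_comp σ (fun i => (α i : ℤ))
  have h3 : ∑ j : Fin n, ((cD D (j : ℕ) : ℤ)) = (majBZ (fun j => ε (π j)) π : ℤ) := by
    rw [hmaj, ← Nat.cast_sum]
    congr 1
    rw [Fin.sum_univ_eq_sum_range (fun j => cD D j) n]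
    exact cD_sum D n hDlt
  rw [h2, h3]
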